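/- arXiv:math/0411309 — 4 statements merged into one kernel-verified Lean document; each statement's English description precedes it below -/
import Mathlib

section
/- Let Δ ⊂ ℝⁿ be a k-simplex with vertices x₀,…,x_k, let f : Δ → ℝ be a function, and let f̂ be the affine interpolation of f: f̂(∑ aᵢxᵢ) = ∑ aᵢ f(xᵢ) for barycentric coordinates aᵢ ≥ 0, ∑ aᵢ = 1. If f is L-Lipschitz and the simplex has fullness Θ(Δ) ≥ η > 0 (meaning its k-volume divided by diam(Δ)^k is at least η, up to the normalizing factor), then f̂ is Lipschitz on Δ with constant at most c(k)·L/η for a constant c(k) depending only on k. -/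
set_option maxHeartbeats 1000000

open MeasureTheory Metric Set
open scoped NNReal ENNReal

section helpers

lemma slab_bound {n k : ℕ} (hk : 0 < k) (V : Submodule ℝ (EuclideanSpace ℝ (Fin n)))
    [FiniteDimensional ℝ V] (hV : Module.finrank ℝ V = k)
    (x0 : EuclideanSpace ℝ (Fin n)) (S : Set (EuclideanSpace ℝ (Fin n)))
    (hSV : ∀ y ∈ S, y - x0 ∈ V) (u : V) (hu : ‖u‖ = 1) (w dd : ℝ)
    (hw0 : 0 ≤ w) (hdd0 : 0 ≤ dd)
    (hw : ∀ y ∈ S, inner (𝕜 := ℝ) ((u : EuclideanSpace ℝ (Fin n))) (y - x0) ∈ Set.Icc (0:ℝ) w)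
    (hdd : ∀ y ∈ S, ‖y - x0‖ ≤ dd) :
    μH[(k:ℝ)] S ≤ ENNReal.ofReal (((k:ℝ)+1)^k * (w * (2*dd)^(k-1))) := by
  classical
  have hknn : (0:ℝ) ≤ (k:ℝ) := Nat.cast_nonneg k
  -- orthonormal basis of V with first vector u
  set j0 : Fin k := ⟨0, hk⟩ with hj0
  have hcard : Module.finrank ℝ V = Fintype.card (Fin k) := by simpa using hV
  have horth : Orthonormal ℝ (({j0} : Set (Fin k)).restrict (fun _ : Fin k => u)) := by
    constructor
    · intro i; exact hu
    · intro i j hij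
      exact absurd (Subsingleton.elim i j) hij
  obtain ⟨b, hb⟩ := horth.exists_orthonormalBasis_extension_of_card_eq hcard
  have hbj0 : b j0 = u := hb j0 rfl
  -- isometric parametrization of x0 + V
  set ρ : EuclideanSpace ℝ (Fin k) → EuclideanSpace ℝ (Fin n) := fun c => x0 + ((b.repr.symm c : V) : EuclideanSpace ℝ (Fin n)) with hρdef
  have hρ : Isometry ρ := by
    intro c c'
    calc edist (ρ c) (ρ c')
        = edist ((b.repr.symm c : V) : EuclideanSpace ℝ (Fin n)) ((b.repr.symm c' : V) : EuclideanSpace ℝ (Fin n)) := by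
          simp [ρ, edist_add_left]
      _ = edist (b.repr.symm c) (b.repr.symm c') := (Subtype.edist_eq _ _).symm
      _ = edist c c' := b.repr.symm.isometry.edist_eq c c'
  have hSrange : S ⊆ Set.range ρ := by
    intro y hy
    refine ⟨b.repr ⟨y - x0, hSV y hy⟩, ?_⟩
    simp [ρ]
  set T : Set (EuclideanSpace ℝ (Fin k)) := ρ ⁻¹' S with hT
  have hμT : μH[(k:ℝ)] T = μH[(k:ℝ)] S := by
    rw [hρ.hausdorffMeasure_preimage (Or.inl hknn), Set.inter_eq_self_of_subset_left hSrange]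
  -- box containment
  set Box : Set (EuclideanSpace ℝ (Fin k)) :=
    {c | ∀ j, c j ∈ (if j = j0 then Set.Icc (0:ℝ) w else Set.Icc (-dd) dd)} with hBox
  have hTBox : T ⊆ Box := by
    intro c hc
    have hyS : ρ c ∈ S := hc
    have hyV : (⟨ρ c - x0, hSV _ hyS⟩ : V) = b.repr.symm c := by
      apply Subtype.ext
      simp [ρ]
    have hcj : ∀ j, c j = inner (𝕜 := ℝ) ((b j : EuclideanSpace ℝ (Fin n))) (ρ c - x0) := by
      intro j
      have : c j = b.repr (b.repr.symm c) j := by simp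
      rw [this, ← hyV, b.repr_apply_apply]
      rfl
    intro j
    by_cases hj : j = j0
    · subst hj
      rw [if_pos rfl, hcj j0, hbj0]
      exact hw _ hyS
    · rw [if_neg hj]
      have h1 : |inner (𝕜 := ℝ) ((b j : EuclideanSpace ℝ (Fin n))) (ρ c - x0)| ≤ ‖(b j : EuclideanSpace ℝ (Fin n))‖ * ‖ρ c - x0‖ :=
        abs_real_inner_le_norm _ _
      have h2 : ‖(b j : EuclideanSpace ℝ (Fin n))‖ = 1 := by
        rw [show ‖(b j : EuclideanSpace ℝ (Fin n))‖ = ‖b j‖ from rfl]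
        exact b.orthonormal.1 j
      rw [hcj j]
      rw [Set.mem_Icc, ← abs_le]
      calc |inner (𝕜 := ℝ) ((b j : EuclideanSpace ℝ (Fin n))) (ρ c - x0)| ≤ 1 * ‖ρ c - x0‖ := by rw [← h2]; exact h1
        _ ≤ dd := by rw [one_mul]; exact hdd _ hyS
  -- Lipschitz comparison with sup-metric pi space
  have hK0 : ((Fintype.card (Fin k) : ℝ≥0) ^ ((1:ℝ≥0∞)/2).toReal) ≤ ((k:ℝ≥0)+1) := by
    have h2 : ((1:ℝ≥0∞)/2).toReal = (1:ℝ)/2 := by norm_num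
    rw [h2, Fintype.card_fin]
    by_contra hlt
    push_neg at hlt
    have h3 : (((k:ℝ≥0)+1))^(2:ℕ) < ((k:ℝ≥0) ^ ((1:ℝ)/2))^(2:ℕ) := by
      exact pow_lt_pow_left₀ hlt (by positivity) (by norm_num)
    have h4 : ((k:ℝ≥0) ^ ((1:ℝ)/2))^(2:ℕ) = (k:ℝ≥0) := by
      rw [← NNReal.rpow_natCast ((k:ℝ≥0) ^ ((1:ℝ)/2)) 2, ← NNReal.rpow_mul]
      norm_num
    rw [h4] at h3
    have h5 : (k:ℝ≥0) ≤ ((k:ℝ≥0)+1)^(2:ℕ) := by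
      calc (k:ℝ≥0) ≤ (k:ℝ≥0)+1 := le_self_add
        _ ≤ ((k:ℝ≥0)+1)^(2:ℕ) := le_self_pow₀ (by simp) (by norm_num)
    exact absurd h3 (not_lt.mpr h5)
  have hg : LipschitzWith ((k:ℝ≥0)+1) ((WithLp.equiv 2 (Fin k → ℝ)).symm) := by
    refine LipschitzWith.weaken ?_ hK0
    intro a b
    have := PiLp.antilipschitzWith_ofLp 2 (fun _ : Fin k => ℝ)
      ((WithLp.equiv 2 (Fin k → ℝ)).symm a) ((WithLp.equiv 2 (Fin k → ℝ)).symm b)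
    simpa using this
  set PBox : Set (Fin k → ℝ) :=
    Set.univ.pi fun j => if j = j0 then Set.Icc (0:ℝ) w else Set.Icc (-dd) dd with hPBox
  have hBoxeq : Box = (WithLp.equiv 2 (Fin k → ℝ)).symm '' PBox := by
    ext c
    rw [Equiv.image_eq_preimage_symm]
    simp only [hBox, Set.mem_setOf_eq, Set.mem_preimage, Equiv.symm_symm, Set.mem_pi,
      Set.mem_univ, true_implies]
    rw [hPBox, Set.mem_univ_pi]
    exact Iff.rfl
  have step2 : μH[(k:ℝ)] Box ≤ (((k:ℝ≥0)+1 : ℝ≥0∞))^(k:ℝ) * μH[(k:ℝ)] PBox := by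
    rw [hBoxeq]
    exact hg.hausdorffMeasure_image_le hknn PBox
  have step3 : μH[(k:ℝ)] PBox = volume PBox := by
    have : ((k:ℝ)) = ((Fintype.card (Fin k) : ℕ) : ℝ) := by simp
    rw [this, MeasureTheory.hausdorffMeasure_pi_real]
  have step4 : volume PBox = ENNReal.ofReal w * (ENNReal.ofReal (2*dd)) ^ (k-1) := by
    rw [hPBox, volume_pi_pi]
    have hval : ∀ j : Fin k, volume (if j = j0 then Set.Icc (0:ℝ) w else Set.Icc (-dd) dd)
        = if j = j0 then ENNReal.ofReal w else ENNReal.ofReal (2*dd) := by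
      intro j
      by_cases hj : j = j0 <;> simp [hj, Real.volume_Icc] <;> ring_nf <;> simp [ENNReal.ofReal_mul hdd0]
    simp_rw [hval]
    rw [← Finset.mul_prod_erase Finset.univ _ (Finset.mem_univ j0), if_pos rfl]
    congr 1
    rw [Finset.prod_congr rfl (fun j hj => if_neg (Finset.ne_of_mem_erase hj)),
      Finset.prod_const, Finset.card_erase_of_mem (Finset.mem_univ j0), Finset.card_univ,
      Fintype.card_fin]
  -- combine
  calc μH[(k:ℝ)] S = μH[(k:ℝ)] T := hμT.symm
    _ ≤ μH[(k:ℝ)] Box := measure_mono hTBox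
    _ ≤ (((k:ℝ≥0)+1 : ℝ≥0∞))^(k:ℝ) * (ENNReal.ofReal w * (ENNReal.ofReal (2*dd)) ^ (k-1)) := by
        rw [← step4, ← step3]; exact step2
    _ = ENNReal.ofReal (((k:ℝ)+1)^k * (w * (2*dd)^(k-1))) := by
        have e1 : ENNReal.ofReal (((k:ℝ)+1)^k * (w * (2*dd)^(k-1)))
            = (ENNReal.ofReal ((k:ℝ)+1))^k
              * (ENNReal.ofReal w * (ENNReal.ofReal (2*dd)) ^ (k-1)) := by
          rw [ENNReal.ofReal_mul (by positivity), ENNReal.ofReal_mul hw0,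
            ENNReal.ofReal_pow (by positivity), ENNReal.ofReal_pow (by positivity)]
        rw [e1]
        congr 1
        rw [ENNReal.rpow_natCast]
        congr 1
        rw [ENNReal.ofReal_add (by positivity) zero_le_one]
        push_cast
        simp

lemma exists_weights {n m : ℕ} (x : Fin m → EuclideanSpace ℝ (Fin n)) {y : EuclideanSpace ℝ (Fin n)}
    (hy : y ∈ convexHull ℝ (Set.range x)) :
    ∃ a : Fin m → ℝ, (∀ i, 0 ≤ a i) ∧ ∑ i, a i = 1 ∧ ∑ i, a i • x i = y := by
  classical
  rw [convexHull_range_eq_exists_affineCombination] at hy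
  obtain ⟨s, wgt, hw0, hw1, rfl⟩ := hy
  refine ⟨fun i => if i ∈ s then wgt i else 0, fun i => ?_, ?_, ?_⟩
  · dsimp only; split
    · exact hw0 _ ‹_›
    · exact le_refl 0
  · simp only
    rw [Finset.sum_ite_mem, Finset.univ_inter]; exact hw1
  · simp only
    rw [Finset.affineCombination_eq_linear_combination s x wgt hw1]
    simp only [ite_smul, zero_smul]
    rw [Finset.sum_ite_mem, Finset.univ_inter]

end helpers


theorem stmt9 (k : ℕ) :
    ∃ c : ℝ, 0 < c ∧ ∀ (n : ℕ) (x : Fin (k + 1) → EuclideanSpace ℝ (Fin n)),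
      AffineIndependent ℝ x →
      ∀ (η L : ℝ), 0 < η →
      ∀ f : EuclideanSpace ℝ (Fin n) → ℝ,
      LipschitzOnWith (Real.toNNReal L) f (convexHull ℝ (Set.range x)) →
      ENNReal.ofReal (η * diam (convexHull ℝ (Set.range x)) ^ k) ≤
        μH[(k : ℝ)] (convexHull ℝ (Set.range x)) →
      ∀ fhat : EuclideanSpace ℝ (Fin n) → ℝ,
      (∀ a : Fin (k + 1) → ℝ, (∀ i, 0 ≤ a i) → ∑ i, a i = 1 →
        fhat (∑ i, a i • x i) = ∑ i, a i * f (x i)) →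
      LipschitzOnWith (Real.toNNReal (c * L / η)) fhat (convexHull ℝ (Set.range x)) := by
  classical
  refine ⟨((k:ℝ)+1)^(k+2) * 2^k, by positivity, ?_⟩
  intro n x hx η L hη f hf hμ fhat hfhat
  set S := convexHull ℝ (Set.range x) with hSdef
  rw [lipschitzOnWith_iff_dist_le_mul]
  intro y hy z hz
  obtain ⟨a, ha0, ha1, hay⟩ := exists_weights x hy
  obtain ⟨bb, hb0, hb1, hbz⟩ := exists_weights x hz
  have hfy : fhat y = ∑ i, a i * f (x i) := by rw [← hay]; exact hfhat a ha0 ha1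
  have hfz : fhat z = ∑ i, bb i * f (x i) := by rw [← hbz]; exact hfhat bb hb0 hb1
  have hxS : ∀ i, x i ∈ S := fun i => subset_convexHull ℝ _ (Set.mem_range_self i)
  have hbd : Bornology.IsBounded S := isBounded_convexHull.mpr (Set.finite_range x).isBounded
  set d := diam S with hd_def
  have hd0 : 0 ≤ d := diam_nonneg
  have hdist : ∀ i j, dist (x i) (x j) ≤ d := fun i j => dist_le_diam_of_mem hbd (hxS i) (hxS j)
  set L' : ℝ := (Real.toNNReal L : ℝ) with hL'
  have hL'0 : 0 ≤ L' := NNReal.coe_nonneg _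
  have hfL : ∀ i j, |f (x i) - f (x j)| ≤ L' * d := by
    intro i j
    have h1 := lipschitzOnWith_iff_dist_le_mul.mp hf (x i) (hxS i) (x j) (hxS j)
    rw [Real.dist_eq] at h1
    exact h1.trans (mul_le_mul_of_nonneg_left (hdist i j) hL'0)
  by_cases hk : k = 0
  · subst hk
    have hxy : y = x 0 := by
      rw [← hay, Fin.sum_univ_one]
      rw [show a 0 = 1 by simpa [Fin.sum_univ_one] using ha1, one_smul]
    have hxz : z = x 0 := by
      rw [← hbz, Fin.sum_univ_one]
      rw [show bb 0 = 1 by simpa [Fin.sum_univ_one] using hb1, one_smul]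
    rw [hxy, hxz]
    simp [dist_nonneg]
  · have hk1 : 1 ≤ k := Nat.one_le_iff_ne_zero.mpr hk
    -- d > 0
    have hne : x ⟨1, by omega⟩ ≠ x 0 := by
      intro h
      have := hx.injective h
      exact absurd (congrArg Fin.val this) (by simp)
    have hd : 0 < d := lt_of_lt_of_le (dist_pos.mpr hne) (hdist _ _)
    -- linear algebra setup
    set w : Fin k → EuclideanSpace ℝ (Fin n) := fun j => x j.succ - x 0 with hw_def
    have hLI0 := (affineIndependent_iff_linearIndependent_vsub ℝ x 0).mp hx
    set emb : Fin k → {i : Fin (k+1) // i ≠ 0} :=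
      fun j => ⟨j.succ, Fin.succ_ne_zero j⟩ with hemb
    have hinj : Function.Injective emb := by
      intro a b h
      simp only [hemb, Subtype.mk.injEq, Fin.succ_inj] at h
      exact h
    have hLI : LinearIndependent ℝ w := by
      have h := hLI0.comp emb hinj
      have he : (fun i : {i : Fin (k+1) // i ≠ 0} => x i -ᵥ x 0) ∘ emb = w := by
        ext j
        simp [hemb, hw_def, vsub_eq_sub]
      rwa [he] at h
    set V := Submodule.span ℝ (Set.range w) with hV_def
    haveI : FiniteDimensional ℝ V := FiniteDimensional.span_of_finite ℝ (Set.finite_range w)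
    have hVrank : Module.finrank ℝ V = k := by
      rw [finrank_span_eq_card hLI, Fintype.card_fin]
    set B : Module.Basis (Fin k) ℝ V := Module.Basis.span hLI with hB
    -- the difference identity
    have hdiffsum : ∀ (aa : Fin (k+1) → ℝ), (∑ i, aa i = 1) →
        (∑ i, aa i • x i) - x 0 = ∑ j : Fin k, aa j.succ • w j := by
      intro aa h1
      have hsum' : ∑ j : Fin k, aa j.succ = 1 - aa 0 := by
        rw [Fin.sum_univ_succ] at h1; linarith
      rw [Fin.sum_univ_succ]
      calc aa 0 • x 0 + (∑ j : Fin k, aa j.succ • x j.succ) - x 0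
          = (∑ j : Fin k, aa j.succ • x j.succ) - (1 - aa 0) • x 0 := by
            rw [sub_smul, one_smul]; abel
        _ = (∑ j : Fin k, aa j.succ • x j.succ) - (∑ j : Fin k, aa j.succ) • x 0 := by
            rw [hsum']
        _ = ∑ j : Fin k, aa j.succ • w j := by
            rw [Finset.sum_smul, ← Finset.sum_sub_distrib]
            exact Finset.sum_congr rfl (fun j _ => by rw [hw_def]; rw [smul_sub])
    have hSV : ∀ y' ∈ S, y' - x 0 ∈ V := by
      intro y' hy'
      obtain ⟨aa, h0, h1, hsum⟩ := exists_weights x hy'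
      rw [← hsum, hdiffsum aa h1]
      exact Submodule.sum_mem _ (fun j _ =>
        Submodule.smul_mem _ _ (Submodule.subset_span (Set.mem_range_self j)))
    -- dual vectors
    set v : Fin k → V := fun j =>
      (InnerProductSpace.toDual ℝ V).symm (LinearMap.toContinuousLinearMap (B.coord j)) with hv
    have hvB : ∀ j (t : V), inner (𝕜 := ℝ) (v j) t = B.coord j t := by
      intro j t
      rw [hv]
      exact InnerProductSpace.toDual_symm_apply
    -- coordinates
    have hcoord : ∀ y' (hy' : y' ∈ S) (aa : Fin (k+1) → ℝ), (∑ i, aa i = 1) →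
        (∑ i, aa i • x i = y') → ∀ j,
        inner (𝕜 := ℝ) ((v j : EuclideanSpace ℝ (Fin n))) (y' - x 0) = aa j.succ := by
      intro y' hy' aa h1 hsum j
      have hrepr : (⟨y' - x 0, hSV y' hy'⟩ : V) = ∑ j' : Fin k, aa j'.succ • B j' := by
        apply Subtype.ext
        push_cast
        rw [← hsum, hdiffsum aa h1]
        exact Finset.sum_congr rfl (fun j' _ => by rw [Module.Basis.span_apply])
      have h2 : inner (𝕜 := ℝ) ((v j : EuclideanSpace ℝ (Fin n))) (y' - x 0)
          = inner (𝕜 := ℝ) (v j) (⟨y' - x 0, hSV y' hy'⟩ : V) := rfl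
      rw [h2, hvB, hrepr]
      simp [Module.Basis.coord_apply, _root_.map_smul, Module.Basis.repr_self, Finsupp.single_apply]
    -- norm bound via slab lemma
    set C : ℝ := ((k:ℝ)+1)^k * 2^(k-1) with hC
    have hC0 : 0 < C := by positivity
    have hvnorm : ∀ j, ‖v j‖ * (η * d) ≤ C := by
      intro j
      have hvj0 : v j ≠ 0 := by
        intro h0
        have h1 := hvB j (B j)
        rw [h0, inner_zero_left] at h1
        simp [Module.Basis.coord_apply, Module.Basis.repr_self] at h1
      have hnv : 0 < ‖v j‖ := norm_pos_iff.mpr hvj0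
      set u : V := ‖v j‖⁻¹ • v j with hu_def
      have hu : ‖u‖ = 1 := norm_smul_inv_norm hvj0
      have hwslab : ∀ y' ∈ S, inner (𝕜 := ℝ) ((u : EuclideanSpace ℝ (Fin n))) (y' - x 0)
          ∈ Set.Icc (0:ℝ) (‖v j‖⁻¹) := by
        intro y' hy'
        obtain ⟨aa, h0, h1, hsum⟩ := exists_weights x hy'
        have hcc := hcoord y' hy' aa h1 hsum j
        have hiu : inner (𝕜 := ℝ) ((u : EuclideanSpace ℝ (Fin n))) (y' - x 0)
            = ‖v j‖⁻¹ * aa j.succ := by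
          rw [hu_def]
          push_cast
          rw [real_inner_smul_left, hcc]
        rw [hiu]
        constructor
        · exact mul_nonneg (by positivity) (h0 _)
        · calc ‖v j‖⁻¹ * aa j.succ ≤ ‖v j‖⁻¹ * 1 := by
                refine mul_le_mul_of_nonneg_left ?_ (by positivity)
                rw [← h1]
                exact Finset.single_le_sum (fun i _ => h0 i) (Finset.mem_univ j.succ)
            _ = ‖v j‖⁻¹ := mul_one _
      have hddslab : ∀ y' ∈ S, ‖y' - x 0‖ ≤ d := by
        intro y' hy'
        rw [← dist_eq_norm]
        exact dist_le_diam_of_mem hbd hy' (hxS 0)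
      have key := slab_bound (by omega : 0 < k) V hVrank (x 0) S hSV u hu (‖v j‖⁻¹) d
        (by positivity) hd0 hwslab hddslab
      have hchain : ENNReal.ofReal (η * d ^ k)
          ≤ ENNReal.ofReal (((k:ℝ)+1)^k * (‖v j‖⁻¹ * (2*d)^(k-1))) := le_trans hμ key
      have hreal : η * d ^ k ≤ ((k:ℝ)+1)^k * (‖v j‖⁻¹ * (2*d)^(k-1)) := by
        rw [ENNReal.ofReal_le_ofReal_iff (by positivity)] at hchain
        exact hchain
      -- rearrange
      have hdk : d ^ k = d ^ (k-1) * d := by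
        rw [← pow_succ]
        congr 1
        omega
      have h2d : (2*d)^(k-1) = 2^(k-1) * d^(k-1) := mul_pow 2 d (k-1)
      have hfin : ‖v j‖ * (η * d) * d^(k-1) ≤ C * d^(k-1) := by
        have h3 := mul_le_mul_of_nonneg_left hreal (le_of_lt hnv)
        calc ‖v j‖ * (η * d) * d^(k-1) = ‖v j‖ * (η * d ^ k) := by rw [hdk]; ring
          _ ≤ ‖v j‖ * (((k:ℝ)+1)^k * (‖v j‖⁻¹ * (2*d)^(k-1))) := h3
          _ = (‖v j‖ * ‖v j‖⁻¹) * (((k:ℝ)+1)^k * 2^(k-1) * d^(k-1)) := by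
              rw [h2d]; ring
          _ = C * d^(k-1) := by
              rw [mul_inv_cancel₀ (ne_of_gt hnv), one_mul, hC]
      exact le_of_mul_le_mul_right hfin (by positivity)
    -- coordinate differences
    have hj : ∀ j : Fin k, |a j.succ - bb j.succ| ≤ C / (η * d) * dist y z := by
      intro j
      have h1 : inner (𝕜 := ℝ) ((v j : EuclideanSpace ℝ (Fin n))) (y - z)
          = a j.succ - bb j.succ := by
        rw [show y - z = (y - x 0) - (z - x 0) by abel, inner_sub_right,
          hcoord y hy a ha1 hay j, hcoord z hz bb hb1 hbz j]
      have h2 : |a j.succ - bb j.succ| ≤ ‖v j‖ * dist y z := by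
        rw [← h1, dist_eq_norm]
        calc |inner (𝕜 := ℝ) ((v j : EuclideanSpace ℝ (Fin n))) (y - z)|
            ≤ ‖(v j : EuclideanSpace ℝ (Fin n))‖ * ‖y - z‖ := abs_real_inner_le_norm _ _
          _ = ‖v j‖ * ‖y - z‖ := rfl
      refine h2.trans (mul_le_mul_of_nonneg_right ?_ dist_nonneg)
      rw [le_div_iff₀ (by positivity)]
      exact hvnorm j
    -- difference formula
    have hzero : ∑ i, (a i - bb i) = 0 := by
      rw [Finset.sum_sub_distrib, ha1, hb1]; ring
    have hdiff : fhat y - fhat z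
        = ∑ j : Fin k, (a j.succ - bb j.succ) * (f (x j.succ) - f (x 0)) := by
      rw [hfy, hfz]
      calc (∑ i, a i * f (x i)) - ∑ i, bb i * f (x i)
          = ∑ i, (a i - bb i) * f (x i) := by
            rw [← Finset.sum_sub_distrib]
            exact Finset.sum_congr rfl (fun i _ => by ring)
        _ = ∑ i, (a i - bb i) * (f (x i) - f (x 0)) := by
            have e1 : ∑ i, (a i - bb i) * (f (x i) - f (x 0))
                = (∑ i, (a i - bb i) * f (x i)) - (∑ i, (a i - bb i)) * f (x 0) := by
              rw [Finset.sum_mul, ← Finset.sum_sub_distrib]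
              exact Finset.sum_congr rfl (fun i _ => by ring)
            rw [e1, hzero]
            ring
        _ = ∑ j : Fin k, (a j.succ - bb j.succ) * (f (x j.succ) - f (x 0)) := by
            rw [Fin.sum_univ_succ]
            simp
    -- final bound
    have hbound : |fhat y - fhat z| ≤ (k:ℝ) * (C / (η * d) * dist y z * (L' * d)) := by
      rw [hdiff]
      calc |∑ j : Fin k, (a j.succ - bb j.succ) * (f (x j.succ) - f (x 0))|
          ≤ ∑ j : Fin k, |(a j.succ - bb j.succ) * (f (x j.succ) - f (x 0))| :=
            Finset.abs_sum_le_sum_abs _ _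
        _ ≤ ∑ j : Fin k, C / (η * d) * dist y z * (L' * d) := by
            refine Finset.sum_le_sum (fun j _ => ?_)
            rw [abs_mul]
            exact mul_le_mul (hj j) (hfL j.succ 0) (abs_nonneg _) (by positivity)
        _ = (k:ℝ) * (C / (η * d) * dist y z * (L' * d)) := by
            rw [Finset.sum_const, Finset.card_univ, Fintype.card_fin, nsmul_eq_mul]
    have heq : (k:ℝ) * (C / (η * d) * dist y z * (L' * d))
        = (k:ℝ) * C * L' / η * dist y z := by
      field_simp
    have hcoef : (k:ℝ) * C * L' / η ≤ (Real.toNNReal (((k:ℝ)+1)^(k+2) * 2^k * L / η) : ℝ) := by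
      rcases le_or_gt L 0 with hL | hL
      · have : L' = 0 := by
          rw [hL']
          simp [Real.toNNReal_of_nonpos hL]
        rw [this]
        simp
      · have hL'' : L' = L := by
          rw [hL']
          simp [Real.coe_toNNReal _ (le_of_lt hL)]
        rw [hL'', Real.coe_toNNReal _ (by positivity)]
        rw [div_le_div_iff₀ hη hη]
        have hkk : (k:ℝ) * C ≤ ((k:ℝ)+1)^(k+2) * 2^k := by
          rw [hC]
          have e1 : (k:ℝ) ≤ ((k:ℝ)+1)^2 := by nlinarith [Nat.cast_nonneg (α := ℝ) k]
          have e2 : (2:ℝ)^(k-1) ≤ 2^k := pow_le_pow_right₀ (by norm_num) (by omega)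
          calc (k:ℝ) * (((k:ℝ)+1)^k * 2^(k-1)) ≤ ((k:ℝ)+1)^2 * (((k:ℝ)+1)^k * 2^k) := by
                apply mul_le_mul e1 (mul_le_mul_of_nonneg_left e2 (by positivity))
                  (by positivity) (by positivity)
            _ = ((k:ℝ)+1)^(k+2) * 2^k := by ring
        nlinarith [mul_le_mul_of_nonneg_right hkk (le_of_lt hL), hL'0, hη.le]
    calc dist (fhat y) (fhat z) = |fhat y - fhat z| := Real.dist_eq _ _
      _ ≤ (k:ℝ) * (C / (η * d) * dist y z * (L' * d)) := hbound
      _ = (k:ℝ) * C * L' / η * dist y z := heq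
      _ ≤ (Real.toNNReal (((k:ℝ)+1)^(k+2) * 2^k * L / η) : ℝ) * dist y z :=
          mul_le_mul_of_nonneg_right hcoef dist_nonneg
end

section
/- Existence of full simplices: for every k ≥ 1 there is a constant c(k) > 0 such that in every normed space X and every k-dimensional affine subspace S of X, there exists a k-simplex Δ ⊆ S with fullness Θ(Δ) = vol_k(Δ)/diam(Δ)^k ≥ c(k), where vol_k is k-dimensional Hausdorff measure induced by the norm. -/
open MeasureTheory Metric

/-- Auerbach-type lemma: a linearly independent family of unit vectors together
with norm-≤1 coordinate functionals. -/
lemma auerbach (Y : Type) [NormedAddCommGroup Y] [NormedSpace ℝ Y] (k : ℕ) (hk : 1 ≤ k)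
    (hY : Module.finrank ℝ Y = k) :
    ∃ (e : Fin k → Y) (f : Fin k → Y →L[ℝ] ℝ),
      (∀ i, ‖e i‖ = 1) ∧ LinearIndependent ℝ e ∧ (∀ i, ‖f i‖ ≤ 1) ∧
        ∀ i j, f i (e j) = if j = i then 1 else 0 := by
  have : FiniteDimensional ℝ Y := FiniteDimensional.of_finrank_pos (by omega)
  let b : Module.Basis (Fin k) ℝ Y := Module.finBasisOfFinrankEq ℝ Y hY
  set K : Set (Fin k → Y) := Set.univ.pi fun _ => sphere (0 : Y) 1 with hKdef
  have hK : IsCompact K := isCompact_univ_pi fun _ => isCompact_sphere 0 1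
  have hmemK : ∀ y : Fin k → Y, (∀ i, ‖y i‖ = 1) → y ∈ K := by
    intro y hy
    intro i _
    simpa [mem_sphere_iff_norm] using hy i
  set u : Fin k → Y := fun i => ‖b i‖⁻¹ • b i with hu
  have hbne : ∀ i, ‖b i‖ ≠ 0 := fun i => norm_ne_zero_iff.mpr (b.ne_zero i)
  have huK : u ∈ K := by
    apply hmemK
    intro i
    rw [hu]
    simp [norm_smul, abs_of_nonneg (inv_nonneg.mpr (norm_nonneg _)),
      inv_mul_cancel₀ (hbne i)]
  have hcont : Continuous fun y : Fin k → Y => |b.det y| := by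
    have h1 : Continuous fun y : Fin k → Y => b.det y := by
      have : (fun y : Fin k → Y => b.det y) = fun y => (b.toMatrix y).det := by
        funext y; rw [Module.Basis.det_apply]
      rw [this]
      apply Continuous.matrix_det
      apply continuous_matrix
      intro i j
      exact ((b.coord i).continuous_of_finiteDimensional).comp (continuous_apply j)
    exact h1.abs
  obtain ⟨e, heK, hmax⟩ := hK.exists_isMaxOn ⟨u, huK⟩ hcont.continuousOn
  have he1 : ∀ i, ‖e i‖ = 1 := by
    intro i
    have := heK i (Set.mem_univ i)
    simpa [mem_sphere_iff_norm] using this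
  have hdetu : b.det u ≠ 0 := by
    have : b.det u = (∏ i, ‖b i‖⁻¹) • b.det b := by
      rw [hu]
      exact (b.det.toMultilinearMap.map_smul_univ (fun i => ‖b i‖⁻¹) b)
    rw [this, b.det_self, smul_eq_mul, mul_one]
    exact Finset.prod_ne_zero_iff.mpr fun i _ => inv_ne_zero (hbne i)
  have hD : b.det e ≠ 0 := by
    intro h
    have h1 := hmax huK
    simp only [h, abs_zero] at h1
    exact hdetu (abs_eq_zero.mp (le_antisymm h1 (abs_nonneg _)))
  have hLI : LinearIndependent ℝ e :=
    ((Module.Basis.is_basis_iff_det b).mpr (isUnit_iff_ne_zero.mpr hD)).1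
  -- maximality bound
  have hbound : ∀ (i : Fin k) (x : Y), |b.det (Function.update e i x)| ≤ |b.det e| * ‖x‖ := by
    intro i x
    rcases eq_or_ne x 0 with rfl | hx
    · simp
    · have hxn : ‖x‖ ≠ 0 := norm_ne_zero_iff.mpr hx
      have hupd : Function.update e i (‖x‖⁻¹ • x) ∈ K := by
        apply hmemK
        intro j
        rcases eq_or_ne j i with rfl | hj
        · simp [norm_smul, abs_of_nonneg (inv_nonneg.mpr (norm_nonneg _)),
            inv_mul_cancel₀ hxn]
        · simp [Function.update_of_ne hj, he1 j]
      have h1 : |b.det (Function.update e i (‖x‖⁻¹ • x))| ≤ |b.det e| := hmax hupd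
      have h2 : b.det (Function.update e i (‖x‖⁻¹ • x)) = ‖x‖⁻¹ * b.det (Function.update e i x) := by
        have := b.det.toMultilinearMap.map_update_smul e i (‖x‖⁻¹) x
        simpa [smul_eq_mul] using this
      rw [h2] at h1
      rw [abs_mul, abs_of_nonneg (inv_nonneg.mpr (norm_nonneg _))] at h1
      calc |b.det (Function.update e i x)| = ‖x‖ * (‖x‖⁻¹ * |b.det (Function.update e i x)|) := by
            field_simp
        _ ≤ ‖x‖ * |b.det e| := by
            apply mul_le_mul_of_nonneg_left h1 (norm_nonneg _)
        _ = |b.det e| * ‖x‖ := mul_comm _ _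
  -- the coordinate functionals
  let g : Fin k → Y →ₗ[ℝ] ℝ := fun i =>
    (b.det e)⁻¹ • (b.det.toMultilinearMap.toLinearMap e i)
  let f : Fin k → Y →L[ℝ] ℝ := fun i => LinearMap.toContinuousLinearMap (g i)
  refine ⟨e, f, he1, hLI, ?_, ?_⟩
  · intro i
    apply ContinuousLinearMap.opNorm_le_bound _ zero_le_one
    intro x
    have : f i x = (b.det e)⁻¹ * b.det (Function.update e i x) := rfl
    rw [this, one_mul]
    rw [Real.norm_eq_abs, abs_mul, abs_inv]
    have hb := hbound i x
    have hDpos : 0 < |b.det e| := abs_pos.mpr hD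
    rw [inv_mul_le_iff₀ hDpos]
    linarith [hb]
  · intro i j
    have : f i (e j) = (b.det e)⁻¹ * b.det (Function.update e i (e j)) := rfl
    rw [this]
    rcases eq_or_ne j i with rfl | hj
    · simp [Function.update_eq_self, inv_mul_cancel₀ hD]
    · have : b.det (Function.update e i (e j)) = 0 := by
        apply b.det.map_eq_zero_of_eq _ _ hj
        · simp [Function.update_of_ne hj, Function.update_self]
      simp [this, hj]

theorem stmt13 (k : ℕ) (hk : 1 ≤ k) :
    ∃ c : ℝ, 0 < c ∧
      ∀ (X : Type) [NormedAddCommGroup X] [NormedSpace ℝ X]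
        [MeasurableSpace X] [BorelSpace X] (S : AffineSubspace ℝ X),
        Module.finrank ℝ S.direction = k → (S : Set X).Nonempty →
        ∃ x : Fin (k + 1) → X, (∀ i, x i ∈ S) ∧ AffineIndependent ℝ x ∧
          ENNReal.ofReal (c * diam (convexHull ℝ (Set.range x)) ^ k) ≤
            μH[(k : ℝ)] (convexHull ℝ (Set.range x)) := by
  have hkR : (0 : ℝ) < k := by exact_mod_cast Nat.lt_of_lt_of_le Nat.zero_lt_one hk
  refine ⟨(1 / (2 * k)) ^ k, by positivity, ?_⟩
  intro X _ _ _ _ S hfin hne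
  obtain ⟨e, f, he1, heLI, hf1, hfδ⟩ := auerbach S.direction k hk hfin
  obtain ⟨p, hp⟩ := hne
  choose F hFext hFnorm using fun i => exists_extension_norm_eq S.direction (f i)
  set x : Fin (k + 1) → X := Fin.cases p (fun j => (e j : X) + p) with hx
  have hx0 : x 0 = p := rfl
  have hxs : ∀ j, x j.succ = (e j : X) + p := fun j => rfl
  refine ⟨x, ?_, ?_, ?_⟩
  · -- membership
    intro i
    induction i using Fin.cases with
    | zero => exact hp
    | succ j =>
      rw [hxs]
      exact AffineSubspace.vadd_mem_of_mem_direction (e j).2 hp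
  · -- affine independence
    rw [affineIndependent_iff_linearIndependent_vsub ℝ x 0]
    have key : (fun i : {i : Fin (k + 1) // i ≠ 0} => x i -ᵥ x 0) =
        (fun j : Fin k => (e j : X)) ∘ fun i : {i : Fin (k + 1) // i ≠ 0} =>
          (i : Fin (k + 1)).pred i.2 := by
      funext i
      have h1 : (i : Fin (k + 1)) = Fin.succ ((i : Fin (k + 1)).pred i.2) :=
        (Fin.succ_pred _ _).symm
      simp only [Function.comp_apply]
      have h2 := hxs ((i : Fin (k + 1)).pred i.2)
      rw [← h1] at h2
      rw [h2, hx0, vsub_eq_sub, add_sub_cancel_right]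
    rw [key]
    have heLIX : LinearIndependent ℝ fun j : Fin k => (e j : X) := by
      have := heLI.map' S.direction.subtype (Submodule.ker_subtype _)
      exact this
    apply heLIX.comp
    intro i j hij
    apply Subtype.ext
    rwa [Fin.pred_inj] at hij
  · -- measure bound
    set Δ : Set X := convexHull ℝ (Set.range x) with hΔ
    set g : X → Fin k → ℝ := fun z i => F i z - F i p with hg
    have hgl : LipschitzWith 1 g := by
      rw [lipschitzWith_iff_dist_le_mul]
      intro z w
      rw [NNReal.coe_one, one_mul, dist_pi_le_iff dist_nonneg]
      intro i
      have h1 : g z i - g w i = F i (z - w) := by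
        simp only [hg, map_sub]
        ring
      rw [Real.dist_eq, h1]
      calc |F i (z - w)| ≤ ‖F i‖ * ‖z - w‖ := (F i).le_opNorm _
        _ ≤ 1 * ‖z - w‖ := by
            apply mul_le_mul_of_nonneg_right _ (norm_nonneg _)
            rw [hFnorm i]; exact hf1 i
        _ = dist z w := by rw [one_mul, dist_eq_norm]
    set box : Set (Fin k → ℝ) := Set.univ.pi fun _ => Set.Icc 0 (1 / (k : ℝ)) with hbox
    have hboxsub : box ⊆ g '' Δ := by
      intro a ha
      have ha' : ∀ j, a j ∈ Set.Icc 0 (1 / (k : ℝ)) := fun j => ha j (Set.mem_univ j)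
      set T : X := (∑ j, a j • (e j : X)) + p with hT
      have hsum_le : ∑ j, a j ≤ 1 := by
        calc ∑ j, a j ≤ ∑ _j : Fin k, 1 / (k : ℝ) := by
              apply Finset.sum_le_sum
              intro j _
              exact (ha' j).2
          _ = 1 := by
              rw [Finset.sum_const, Finset.card_univ, Fintype.card_fin, nsmul_eq_mul]
              field_simp
      refine ⟨T, ?_, ?_⟩
      · -- T ∈ Δ
        set w : Fin (k + 1) → ℝ := Fin.cases (1 - ∑ j, a j) a with hw
        have hw0 : w 0 = 1 - ∑ j, a j := rfl
        have hws : ∀ j, w j.succ = a j := fun j => rfl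
        have hTw : ∑ i, w i • x i = T := by
          rw [Fin.sum_univ_succ, hw0, hx0]
          simp only [hws, hxs]
          rw [hT]
          have : ∑ j : Fin k, a j • ((e j : X) + p)
              = (∑ j, a j • (e j : X)) + (∑ j, a j) • p := by
            rw [Finset.sum_smul]
            rw [← Finset.sum_add_distrib]
            congr 1
            funext j
            rw [smul_add]
          rw [this]
          rw [← add_assoc, add_comm ((1 - ∑ j, a j) • p), add_assoc]
          congr 1
          rw [← add_smul]
          simp
        rw [← hTw]
        apply (convex_convexHull ℝ _).sum_mem
        · intro i _
          induction i using Fin.cases with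
          | zero => rw [hw0]; linarith
          | succ j => rw [hws]; exact (ha' j).1
        · rw [Fin.sum_univ_succ, hw0]
          simp only [hws]
          ring
        · intro i _
          exact subset_convexHull ℝ _ (Set.mem_range_self i)
      · -- g T = a
        funext i
        have h1 : F i T - F i p = F i (∑ j, a j • (e j : X)) := by
          rw [hT, map_add]; ring
        have h2 : F i (∑ j, a j • (e j : X)) = ∑ j, a j * F i (e j : X) := by
          rw [map_sum]
          congr 1
          funext j
          rw [_root_.map_smul, smul_eq_mul]
        have h3 : ∀ j, F i ((e j : X)) = f i (e j) := fun j => hFext i (e j)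
        have : g T i = ∑ j, a j * f i (e j) := by
          rw [hg]
          simp only []
          rw [h1, h2]
          congr 1
          funext j
          rw [h3]
        rw [this]
        have : ∑ j, a j * f i (e j) = ∑ j, if j = i then a j else 0 := by
          congr 1
          funext j
          rw [hfδ i j]
          split <;> simp
        rw [this, Finset.sum_ite_eq' Finset.univ i fun j => a j]
        simp
    -- Hausdorff measure chain
    have h1 : μH[(k : ℝ)] (g '' Δ) ≤ μH[(k : ℝ)] Δ := by
      have := hgl.hausdorffMeasure_image_le (le_of_lt (by exact_mod_cast hkR) : (0:ℝ) ≤ k) Δ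
      simpa using this
    have h2 : μH[(k : ℝ)] box ≤ μH[(k : ℝ)] (g '' Δ) := measure_mono hboxsub
    have h3 : μH[(k : ℝ)] box = ENNReal.ofReal ((1 / (k : ℝ)) ^ k) := by
      have hμ : (μH[(k : ℝ)] : Measure (Fin k → ℝ)) = volume := by
        have := hausdorffMeasure_pi_real (ι := Fin k)
        rwa [Fintype.card_fin] at this
      rw [hμ, hbox, volume_pi_pi]
      simp only [Real.volume_Icc, sub_zero]
      rw [Finset.prod_const, Finset.card_univ, Fintype.card_fin]
      rw [← ENNReal.ofReal_pow (by positivity)]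
    have hdiam : diam Δ ≤ 2 := by
      rw [hΔ, convexHull_diam]
      apply diam_le_of_forall_dist_le (by norm_num)
      rintro z ⟨i, rfl⟩ w ⟨j, rfl⟩
      have hdp : ∀ i, dist (x i) p ≤ 1 := by
        intro i
        induction i using Fin.cases with
        | zero => rw [hx0]; simp
        | succ j =>
          rw [hxs, dist_eq_norm, add_sub_cancel_right]
          exact le_of_eq (he1 j)
      calc dist (x i) (x j) ≤ dist (x i) p + dist p (x j) := dist_triangle _ _ _
        _ ≤ 1 + 1 := add_le_add (hdp i) (by rw [dist_comm]; exact hdp j)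
        _ = 2 := by norm_num
    have hfinal : (1 / (2 * (k : ℝ))) ^ k * diam Δ ^ k ≤ (1 / (k : ℝ)) ^ k := by
      have h4 : (1 / (2 * (k : ℝ))) ^ k * diam Δ ^ k ≤ (1 / (2 * (k : ℝ))) ^ k * 2 ^ k := by
        apply mul_le_mul_of_nonneg_left _ (by positivity)
        exact pow_le_pow_left₀ diam_nonneg hdiam k
      calc (1 / (2 * (k : ℝ))) ^ k * diam Δ ^ k ≤ (1 / (2 * (k : ℝ))) ^ k * 2 ^ k := h4
        _ = (1 / (k : ℝ)) ^ k := by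
            rw [← mul_pow]
            congr 1
            field_simp
    calc ENNReal.ofReal ((1 / (2 * (k : ℝ))) ^ k * diam Δ ^ k)
        ≤ ENNReal.ofReal ((1 / (k : ℝ)) ^ k) := ENNReal.ofReal_le_ofReal hfinal
      _ = μH[(k : ℝ)] box := h3.symm
      _ ≤ μH[(k : ℝ)] (g '' Δ) := h2
      _ ≤ μH[(k : ℝ)] Δ := h1
end

section
/- Eilenberg inequality (coarea-type): let X be a metric space, f : X → ℝ Lipschitz, and A ⊆ X with finite k-dimensional Hausdorff measure (k ≥ 1). Then ∫_ℝ H^{k-1}(A ∩ f⁻¹(t)) dt ≤ c(k)·Lip(f)·H^k(A), where c(k) depends only on k. -/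
open MeasureTheory

open Set Filter ENNReal

theorem stmt14 (k : ℕ) (hk : 1 ≤ k) :
    ∃ c : ℝ, 0 < c ∧
      ∀ (X : Type) [MetricSpace X] [MeasurableSpace X] [BorelSpace X]
        (f : X → ℝ) (K : NNReal), LipschitzWith K f →
        ∀ A : Set X, μH[(k : ℝ)] A < ⊤ →
        ∫⁻ t : ℝ, μH[(k : ℝ) - 1] (A ∩ f ⁻¹' {t}) ≤
          ENNReal.ofReal c * (K : ENNReal) * μH[(k : ℝ)] A := by
  classical
  refine ⟨2, by norm_num, ?_⟩
  intro X _ _ _ f K hf A hA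
  set d : ℝ := (k : ℝ) - 1 with hd
  have hd0 : 0 ≤ d := by
    simp only [hd, sub_nonneg]
    exact_mod_cast hk
  have hk0 : (0:ℝ) < (k:ℝ) := by exact_mod_cast hk
  -- main estimate with ε
  have main : ∀ ε : ℝ≥0∞, 0 < ε →
      ∫⁻ t : ℝ, μH[d] (A ∩ f ⁻¹' {t}) ≤ 2 * (K : ℝ≥0∞) * (μH[(k : ℝ)] A + ε) := by
    intro ε hε
    -- for each j, choose a cover at scale 1/(j+1)
    have hcov : ∀ j : ℕ, ∃ t : ℕ → Set X, (A ⊆ ⋃ n, t n) ∧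
        (∀ n, EMetric.diam (t n) ≤ (↑(j+1) : ℝ≥0∞)⁻¹) ∧
        (∑' n, ⨆ _ : (t n).Nonempty, EMetric.diam (t n) ^ (k:ℝ)) < μH[(k : ℝ)] A + ε := by
      intro j
      have hr : (0:ℝ≥0∞) < (↑(j+1) : ℝ≥0∞)⁻¹ := by
        simp [ENNReal.inv_pos]
      have h1 : (⨅ (t : ℕ → Set X) (_ : A ⊆ ⋃ n, t n)
            (_ : ∀ n, EMetric.diam (t n) ≤ (↑(j+1) : ℝ≥0∞)⁻¹),
            ∑' n, ⨆ _ : (t n).Nonempty, EMetric.diam (t n) ^ (k:ℝ)) ≤ μH[(k : ℝ)] A := by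
        rw [MeasureTheory.Measure.hausdorffMeasure_apply]
        exact le_iSup₂ (f := fun r (_ : 0 < r) => ⨅ (t : ℕ → Set X) (_ : A ⊆ ⋃ n, t n)
            (_ : ∀ n, EMetric.diam (t n) ≤ r),
            ∑' n, ⨆ _ : (t n).Nonempty, EMetric.diam (t n) ^ (k:ℝ)) _ hr
      have h2 : (⨅ (t : ℕ → Set X) (_ : A ⊆ ⋃ n, t n)
            (_ : ∀ n, EMetric.diam (t n) ≤ (↑(j+1) : ℝ≥0∞)⁻¹),
            ∑' n, ⨆ _ : (t n).Nonempty, EMetric.diam (t n) ^ (k:ℝ)) < μH[(k : ℝ)] A + ε :=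
        h1.trans_lt (ENNReal.lt_add_right hA.ne hε.ne')
      simp only [iInf_lt_iff] at h2
      obtain ⟨t, h1', h2', h3'⟩ := h2
      exact ⟨t, h1', h2', h3'⟩
    choose T hTcov hTdiam hTsum using hcov
    -- diameters are finite
    have hTfin : ∀ j n, EMetric.diam (T j n) ≠ ⊤ := fun j n =>
      ((hTdiam j n).trans_lt (by simp [ENNReal.inv_lt_top])).ne
    -- intervals
    set I : ℕ → ℕ → Set ℝ := fun j n =>
      if h : (T j n).Nonempty then
        Set.Icc (f h.some - (K : ℝ) * (EMetric.diam (T j n)).toReal)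
                (f h.some + (K : ℝ) * (EMetric.diam (T j n)).toReal)
      else ∅ with hI
    -- the majorant functions
    set g : ℕ → ℝ → ℝ≥0∞ := fun j t =>
      ∑' n, (I j n).indicator (fun _ => EMetric.diam (T j n) ^ d) t with hg
    have hImeas : ∀ j n, MeasurableSet (I j n) := by
      intro j n; rw [hI]; dsimp only
      split
      · exact measurableSet_Icc
      · exact MeasurableSet.empty
    have hgmeas : ∀ j, Measurable (g j) := by
      intro j
      exact Measurable.ennreal_tsum fun n =>
        (measurable_const.indicator (hImeas j n))
    -- image of f on T j n is inside I j n
    have hfI : ∀ j n, f '' (T j n) ⊆ I j n := by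
      intro j n y hy
      obtain ⟨x, hx, rfl⟩ := hy
      have hne : (T j n).Nonempty := ⟨x, hx⟩
      rw [hI]; dsimp only
      rw [dif_pos hne]
      have hdist : dist (f x) (f hne.some) ≤ (K : ℝ) * (EMetric.diam (T j n)).toReal := by
        refine le_trans (hf.dist_le_mul _ _) ?_
        gcongr
        have h := EMetric.edist_le_diam_of_mem hx hne.some_mem
        rw [dist_edist]
        exact ENNReal.toReal_mono (hTfin j n) h
      rw [Real.dist_eq, abs_le] at hdist
      rw [Set.mem_Icc]
      constructor <;> linarith [hdist.1, hdist.2]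
    -- integral of g j is bounded
    have hgint : ∀ j, ∫⁻ t, g j t ≤ 2 * (K : ℝ≥0∞) * (μH[(k : ℝ)] A + ε) := by
      intro j
      rw [hg]
      dsimp only
      rw [lintegral_tsum (fun n => (measurable_const.indicator (hImeas j n)).aemeasurable)]
      have hterm : ∀ n, ∫⁻ t, (I j n).indicator (fun _ => EMetric.diam (T j n) ^ d) t ≤
          2 * (K : ℝ≥0∞) * (⨆ _ : (T j n).Nonempty, EMetric.diam (T j n) ^ (k:ℝ)) := by
        intro n
        rw [lintegral_indicator_const (hImeas j n)]
        by_cases h : (T j n).Nonempty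
        · rw [hI]; dsimp only
          rw [dif_pos h]
          rw [Real.volume_Icc]
          have hvol : ENNReal.ofReal
              ((f h.some + (K:ℝ) * (EMetric.diam (T j n)).toReal)
                - (f h.some - (K:ℝ) * (EMetric.diam (T j n)).toReal))
              = 2 * (K : ℝ≥0∞) * EMetric.diam (T j n) := by
            have : (f h.some + (K:ℝ) * (EMetric.diam (T j n)).toReal)
                - (f h.some - (K:ℝ) * (EMetric.diam (T j n)).toReal)
                = 2 * ((K:ℝ) * (EMetric.diam (T j n)).toReal) := by ring
            rw [this, ENNReal.ofReal_mul (by norm_num : (0:ℝ) ≤ 2),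
              ENNReal.ofReal_mul K.coe_nonneg, ENNReal.ofReal_toReal (hTfin j n)]
            simp [ENNReal.ofReal_ofNat]
            ring
          rw [hvol, iSup_pos h]
          rw [show EMetric.diam (T j n) ^ d * (2 * (K:ℝ≥0∞) * EMetric.diam (T j n))
              = 2 * (K:ℝ≥0∞) * (EMetric.diam (T j n) ^ d * EMetric.diam (T j n)) by ring]
          gcongr
          by_cases h0 : EMetric.diam (T j n) = 0
          · rw [h0]
            simp [ENNReal.zero_rpow_of_pos hk0]
          · have hsum : EMetric.diam (T j n) ^ d * EMetric.diam (T j n) ^ (1:ℝ)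
                = EMetric.diam (T j n) ^ ((k:ℝ)) := by
              rw [← ENNReal.rpow_add _ _ h0 (hTfin j n), hd]
              norm_num
            calc EMetric.diam (T j n) ^ d * EMetric.diam (T j n)
                = EMetric.diam (T j n) ^ d * EMetric.diam (T j n) ^ (1:ℝ) := by
                  rw [ENNReal.rpow_one]
              _ = EMetric.diam (T j n) ^ ((k:ℝ)) := hsum
              _ ≤ EMetric.diam (T j n) ^ ((k:ℝ)) := le_rfl
        · rw [hI]; dsimp only
          rw [dif_neg h]
          simp
      calc ∑' n, ∫⁻ t, (I j n).indicator (fun _ => EMetric.diam (T j n) ^ d) t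
          ≤ ∑' n, 2 * (K : ℝ≥0∞) * (⨆ _ : (T j n).Nonempty, EMetric.diam (T j n) ^ (k:ℝ)) :=
            ENNReal.tsum_le_tsum hterm
        _ = 2 * (K : ℝ≥0∞) * ∑' n, (⨆ _ : (T j n).Nonempty, EMetric.diam (T j n) ^ (k:ℝ)) :=
            ENNReal.tsum_mul_left
        _ ≤ 2 * (K : ℝ≥0∞) * (μH[(k : ℝ)] A + ε) := by gcongr; exact (hTsum j).le
    -- pointwise bound
    have hpt : ∀ t : ℝ, μH[d] (A ∩ f ⁻¹' {t}) ≤ liminf (fun j => g j t) atTop := by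
      intro t
      rw [MeasureTheory.Measure.hausdorffMeasure_apply]
      refine iSup₂_le fun r hr => ?_
      refine le_liminf_of_le (by isBoundedDefault) ?_
      have hev : ∀ᶠ j : ℕ in atTop, ((↑(j+1) : ℝ≥0∞)⁻¹ ≤ r) := by
        obtain ⟨m, hm⟩ := ENNReal.exists_inv_nat_lt hr.ne'
        filter_upwards [eventually_ge_atTop m] with j hj
        refine le_trans ?_ hm.le
        simp only [ENNReal.inv_le_inv]
        exact_mod_cast by omega
      filter_upwards [hev] with j hj
      -- cover of A ∩ f⁻¹ t
      set u : ℕ → Set X := fun n => if (T j n).Nonempty ∧ t ∈ I j n then T j n else ∅ with hu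
      have hucov : A ∩ f ⁻¹' {t} ⊆ ⋃ n, u n := by
        rintro x ⟨hxA, hxf⟩
        obtain ⟨n, hn⟩ := Set.mem_iUnion.1 (hTcov j hxA)
        refine Set.mem_iUnion.2 ⟨n, ?_⟩
        rw [hu]; dsimp only
        have ht : t ∈ I j n := by
          have : f x ∈ f '' (T j n) := ⟨x, hn, rfl⟩
          rw [Set.mem_preimage, Set.mem_singleton_iff] at hxf
          rw [← hxf]; exact hfI j n this
        rw [if_pos ⟨⟨x, hn⟩, ht⟩]; exact hn
      have hudiam : ∀ n, EMetric.diam (u n) ≤ r := by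
        intro n
        rw [hu]; dsimp only
        split
        · exact (hTdiam j n).trans hj
        · exact EMetric.diam_empty.trans_le zero_le
      refine le_trans (b := ∑' n, ⨆ _ : (u n).Nonempty, EMetric.diam (u n) ^ d)
        (iInf₂_le_of_le u hucov (iInf_le_of_le hudiam le_rfl)) ?_
      · rw [hg]; dsimp only
        refine ENNReal.tsum_le_tsum fun n => ?_
        rw [hu]; dsimp only
        by_cases h : (T j n).Nonempty ∧ t ∈ I j n
        · rw [if_pos h]
          refine iSup_le fun _ => ?_
          rw [Set.indicator_of_mem h.2]
        · rw [if_neg h]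
          simp
    calc ∫⁻ t, μH[d] (A ∩ f ⁻¹' {t})
        ≤ ∫⁻ t, liminf (fun j => g j t) atTop := lintegral_mono hpt
      _ ≤ liminf (fun j => ∫⁻ t, g j t) atTop := lintegral_liminf_le hgmeas
      _ ≤ 2 * (K : ℝ≥0∞) * (μH[(k : ℝ)] A + ε) := by
          refine liminf_le_of_le (by isBoundedDefault) ?_
          intro b hb
          obtain ⟨j, hjb⟩ := hb.exists
          exact hjb.trans (hgint j)
  -- let ε → 0
  have h2K : ENNReal.ofReal 2 * (K : ℝ≥0∞) = 2 * (K : ℝ≥0∞) := by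
    norm_num
  rw [h2K]
  by_cases hK : (K : ℝ≥0∞) = 0
  · have := main 1 one_pos
    simpa [hK] using this
  · refine ENNReal.le_of_forall_pos_le_add fun η hη hfin => ?_
    have hKtop : (K : ℝ≥0∞) ≠ ⊤ := ENNReal.coe_ne_top
    have hε : (0:ℝ≥0∞) < (η : ℝ≥0∞) / (2 * K) := by
      apply ENNReal.div_pos (by exact_mod_cast hη.ne') (by
        exact ENNReal.mul_ne_top (by norm_num) hKtop)
    refine le_trans (main _ hε) ?_
    rw [mul_add]
    gcongr
    rw [ENNReal.mul_div_cancel (by simpa using hK) (ENNReal.mul_ne_top (by norm_num) hKtop)]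
end

section
/- Cone mass estimate in ℝⁿ: let P ⊆ ℝⁿ be a set contained in a k-dimensional affine subspace S with H^k(P) < ∞, and let z ∈ ℝⁿ. Then the cone C_z P = {(1-t)z + tx : x ∈ P, t ∈ [0,1]} satisfies H^{k+1}(C_z P) ≤ c(k)·dist(z, S)·H^k(P) for a constant c(k) depending only on k. -/
open MeasureTheory Metric

open Set Module
open scoped NNReal ENNReal Pointwise

/-- Auxiliary: a finite orthonormal family in a Euclidean space gives a linear isometry
from the standard Euclidean space, sending `y` to `∑ i, y i • w i`. -/
private lemma aux_isometry {n m : ℕ} (w : Fin m → EuclideanSpace ℝ (Fin n))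
    (hw : Orthonormal ℝ w) :
    ∃ Λ : EuclideanSpace ℝ (Fin m) →ₗᵢ[ℝ] EuclideanSpace ℝ (Fin n),
      ∀ y, Λ y = ∑ i, y i • w i := by
  classical
  set bE := (EuclideanSpace.basisFun (Fin m) ℝ).toBasis with hbE
  have hcoe : ⇑bE = ⇑(EuclideanSpace.basisFun (Fin m) ℝ) :=
    (EuclideanSpace.basisFun (Fin m) ℝ).coe_toBasis
  have hon : Orthonormal ℝ ⇑bE := by
    rw [hcoe]; exact (EuclideanSpace.basisFun (Fin m) ℝ).orthonormal
  have hcomp : ⇑(bE.constr ℝ w) ∘ ⇑bE = w := by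
    funext i
    simp [Function.comp, Basis.constr_basis]
  refine ⟨(bE.constr ℝ w).isometryOfOrthonormal hon (by rw [hcomp]; exact hw), fun y => ?_⟩
  rw [LinearMap.coe_isometryOfOrthonormal, Basis.constr_apply_fintype]
  simp only [Basis.equivFun_apply, hbE, OrthonormalBasis.coe_toBasis_repr_apply,
    EuclideanSpace.basisFun_repr]

/-- Auxiliary: every point of an affine subspace is in the range of the affine parametrization
given by a point of the subspace and an orthonormal basis of its direction. -/
private lemma aux_range {n k : ℕ} (S : AffineSubspace ℝ (EuclideanSpace ℝ (Fin n)))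
    (b : OrthonormalBasis (Fin k) ℝ S.direction) {p₀ : EuclideanSpace ℝ (Fin n)} (hp₀ : p₀ ∈ S)
    (f : EuclideanSpace ℝ (Fin k) → EuclideanSpace ℝ (Fin n))
    (hf : ∀ u, f u = p₀ + ∑ j, u j • (b j : EuclideanSpace ℝ (Fin n))) :
    ∀ x ∈ S, ∃ u, f u = x := by
  intro x hx
  have hxd : x - p₀ ∈ S.direction := by
    simpa [vsub_eq_sub] using AffineSubspace.vsub_mem_direction hx hp₀
  refine ⟨b.repr ⟨x - p₀, hxd⟩, ?_⟩
  rw [hf]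
  have h1 := b.sum_repr ⟨x - p₀, hxd⟩
  have h2 : ∑ j, (b.repr ⟨x - p₀, hxd⟩) j • (b j : EuclideanSpace ℝ (Fin n)) = x - p₀ := by
    calc ∑ j, (b.repr ⟨x - p₀, hxd⟩) j • (b j : EuclideanSpace ℝ (Fin n))
        = ((∑ j, (b.repr ⟨x - p₀, hxd⟩) j • b j : S.direction) : EuclideanSpace ℝ (Fin n)) := by
          push_cast
          rfl
      _ = x - p₀ := by rw [h1]
  rw [h2]
  abel

set_option maxHeartbeats 1000000 in
theorem stmt18 (k : ℕ) :
    ∃ c : ℝ, 0 < c ∧ ∀ (n : ℕ) (S : AffineSubspace ℝ (EuclideanSpace ℝ (Fin n))),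
      (S : Set (EuclideanSpace ℝ (Fin n))).Nonempty →
      Module.finrank ℝ S.direction = k →
      ∀ P : Set (EuclideanSpace ℝ (Fin n)),
        P ⊆ (S : Set (EuclideanSpace ℝ (Fin n))) → μH[(k : ℝ)] P < ⊤ →
      ∀ z : EuclideanSpace ℝ (Fin n),
        μH[(k : ℝ) + 1] {p | ∃ x ∈ P, ∃ t ∈ Set.Icc (0 : ℝ) 1, p = (1 - t) • z + t • x} ≤
          ENNReal.ofReal (c * infDist z (S : Set (EuclideanSpace ℝ (Fin n)))) *
            μH[(k : ℝ)] P := by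
  classical
  refine ⟨((k : ℝ) + 1) ^ (k + 1), by positivity, ?_⟩
  intro n S hne hrk P hPS _hPfin z
  haveI : Nonempty ↥S := ⟨⟨hne.choose, hne.choose_spec⟩⟩
  set b : OrthonormalBasis (Fin k) ℝ S.direction :=
    (stdOrthonormalBasis ℝ S.direction).reindex (finCongr hrk) with hb
  have hbon : Orthonormal ℝ (fun j => (b j : EuclideanSpace ℝ (Fin n))) := by
    have := b.orthonormal.comp_linearIsometry S.direction.subtypeₗᵢ
    exact this
  by_cases hzS : z ∈ S
  · -- degenerate case : the cone is contained in `S`, which has zero `k+1`-measure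
    obtain ⟨Λ, hΛ⟩ := aux_isometry _ hbon
    set ψ : EuclideanSpace ℝ (Fin k) → EuclideanSpace ℝ (Fin n) := fun u => z + Λ u with hψ
    have hψiso : Isometry ψ := by
      refine Isometry.of_dist_eq fun a a' => ?_
      simp only [hψ, dist_eq_norm, add_sub_add_left_eq_sub, ← map_sub, Λ.norm_map]
    have hCS : {p | ∃ x ∈ P, ∃ t ∈ Set.Icc (0 : ℝ) 1, p = (1 - t) • z + t • x}
        ⊆ (S : Set (EuclideanSpace ℝ (Fin n))) := by
      rintro p ⟨x, hx, t, _ht, rfl⟩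
      have h3 := S.smul_vsub_vadd_mem t (hPS hx) hzS hzS
      have heq : (1 - t) • z + t • x = t • (x -ᵥ z) +ᵥ z := by
        simp only [vsub_eq_sub, vadd_eq_add]
        module
      rw [heq]
      exact h3
    have hSr : (S : Set (EuclideanSpace ℝ (Fin n))) ⊆ Set.range ψ := by
      intro x hx
      obtain ⟨u, hu⟩ := aux_range S b hzS ψ (fun u => by show z + Λ u = _; rw [hΛ]) x hx
      exact ⟨u, hu⟩
    have h0 : μH[(k : ℝ) + 1] {p | ∃ x ∈ P, ∃ t ∈ Set.Icc (0 : ℝ) 1, p = (1 - t) • z + t • x}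
        ≤ 0 := by
      have h1 : μH[(k : ℝ) + 1] {p | ∃ x ∈ P, ∃ t ∈ Set.Icc (0 : ℝ) 1, p = (1 - t) • z + t • x}
          ≤ μH[(k : ℝ) + 1] (ψ '' Set.univ) :=
        measure_mono (by rw [Set.image_univ]; exact hCS.trans hSr)
      rw [hψiso.hausdorffMeasure_image (Or.inl (by positivity))] at h1
      have h2 : μH[(k : ℝ) + 1] (Set.univ : Set (EuclideanSpace ℝ (Fin k))) = 0 := by
        have hc : (((k : ℝ≥0) + 1 : ℝ≥0) : ℝ) = (k : ℝ) + 1 := by push_cast; ring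
        rw [← hc]
        refine hausdorffMeasure_of_dimH_lt ?_
        rw [Real.dimH_univ_eq_finrank, finrank_euclideanSpace_fin]
        exact_mod_cast Nat.lt_succ_self k
      exact h1.trans h2.le
    exact h0.trans zero_le
  · -- main case : `z ∉ S`
    -- Borel hull of `P` inside `S`
    obtain ⟨B₀, hPB₀, hB₀meas, hB₀⟩ := exists_measurable_superset (μH[(k : ℝ)]) P
    have hSclosed : IsClosed (S : Set (EuclideanSpace ℝ (Fin n))) :=
      S.closed_of_finiteDimensional
    set Bs : Set (EuclideanSpace ℝ (Fin n)) := B₀ ∩ S with hBsdef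
    have hPB : P ⊆ Bs := Set.subset_inter hPB₀ hPS
    have hBsmeas : MeasurableSet Bs := hB₀meas.inter hSclosed.measurableSet
    have hBsP : μH[(k : ℝ)] Bs ≤ μH[(k : ℝ)] P := by
      calc μH[(k : ℝ)] Bs ≤ μH[(k : ℝ)] B₀ := measure_mono Set.inter_subset_left
        _ = μH[(k : ℝ)] P := hB₀
    -- orthogonal projection of z
    set p₀ : EuclideanSpace ℝ (Fin n) := ↑(EuclideanGeometry.orthogonalProjection S z)
      with hp₀def
    have hp₀S : p₀ ∈ S := EuclideanGeometry.orthogonalProjection_mem z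
    set v : EuclideanSpace ℝ (Fin n) := z - p₀ with hvdef
    have hvorth : v ∈ S.directionᗮ := by
      have h := EuclideanGeometry.orthogonalProjection_vsub_mem_direction_orthogonal S z
      have h2 := Submodule.neg_mem _ h
      simpa [hvdef, vsub_eq_sub, neg_sub] using h2
    have hvne : v ≠ 0 := sub_ne_zero.2 fun h => hzS (h ▸ hp₀S)
    set nv : ℝ := ‖v‖ with hnvdef
    have hnv : 0 < nv := norm_pos_iff.2 hvne
    have hdist : infDist z (S : Set (EuclideanSpace ℝ (Fin n))) = nv := by
      refine le_antisymm (by simpa [dist_eq_norm] using infDist_le_dist_of_mem hp₀S) ?_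
      by_contra hlt
      push_neg at hlt
      obtain ⟨x, hx, hdx⟩ := (infDist_lt_iff hne).1 hlt
      have hpy := EuclideanGeometry.dist_sq_eq_dist_orthogonalProjection_sq_add_dist_orthogonalProjection_sq
        (s := S) z hx
      have hzp : dist z p₀ = nv := by rw [dist_eq_norm]
      have hle : dist z p₀ ≤ dist x z := by
        nlinarith [dist_nonneg (x := x) (y := p₀), dist_nonneg (x := x) (y := z),
          dist_nonneg (x := z) (y := p₀)]
      rw [hzp] at hle
      rw [dist_comm] at hdx
      linarith
    -- orthonormal family adapted to `S` and `z`
    set Bf : Fin (k + 1) → EuclideanSpace ℝ (Fin n) :=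
      Fin.snoc (fun j => (b j : EuclideanSpace ℝ (Fin n))) (nv⁻¹ • v) with hBf
    have hBfc : ∀ j : Fin k, Bf j.castSucc = (b j : EuclideanSpace ℝ (Fin n)) := fun j =>
      Fin.snoc_castSucc _ _ _
    have hBfl : Bf (Fin.last k) = nv⁻¹ • v := Fin.snoc_last _ _
    have hbon' := orthonormal_iff_ite.1 hbon
    have hBon : Orthonormal ℝ Bf := by
      rw [orthonormal_iff_ite]
      intro i j
      refine Fin.lastCases ?_ (fun i' => ?_) i
      · refine Fin.lastCases ?_ (fun j' => ?_) j
        · rw [hBfl, if_pos rfl]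
          rw [real_inner_smul_left, real_inner_smul_right, real_inner_self_eq_norm_mul_norm]
          rw [← hnvdef]
          field_simp
        · rw [hBfl, hBfc, if_neg (Fin.castSucc_lt_last j').ne.symm]
          rw [real_inner_smul_left]
          rw [Submodule.inner_left_of_mem_orthogonal (b j').2 hvorth, mul_zero]
      · refine Fin.lastCases ?_ (fun j' => ?_) j
        · rw [hBfl, hBfc, if_neg (Fin.castSucc_lt_last i').ne]
          rw [real_inner_smul_right]
          rw [Submodule.inner_right_of_mem_orthogonal (b i').2 hvorth, mul_zero]
        · rw [hBfc, hBfc, hbon' i' j']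
          simp [Fin.castSucc_inj]
    obtain ⟨Λ, hΛ⟩ := aux_isometry _ hBon
    set G : EuclideanSpace ℝ (Fin (k + 1)) → EuclideanSpace ℝ (Fin n) :=
      fun y => p₀ + Λ y with hG
    have hGiso : Isometry G := by
      refine Isometry.of_dist_eq fun a a' => ?_
      simp only [hG, dist_eq_norm, add_sub_add_left_eq_sub, ← map_sub, Λ.norm_map]
    have hGaff : ∀ (a a' : EuclideanSpace ℝ (Fin (k + 1))) (t : ℝ),
        G ((1 - t) • a + t • a') = (1 - t) • G a + t • G a' := by
      intro a a' t
      show p₀ + Λ ((1 - t) • a + t • a') = (1 - t) • (p₀ + Λ a) + t • (p₀ + Λ a')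
      rw [Λ.map_add, Λ.map_smul, Λ.map_smul]
      module
    -- the inclusion of `ℝ^k` as the first coordinates
    set J : EuclideanSpace ℝ (Fin k) → EuclideanSpace ℝ (Fin (k + 1)) :=
      fun u => WithLp.toLp 2 (Fin.snoc (α := fun _ => ℝ) (WithLp.ofLp u) 0) with hJ
    have hJc : ∀ (u : EuclideanSpace ℝ (Fin k)) (j : Fin k), J u j.castSucc = u j := fun u j =>
      Fin.snoc_castSucc (α := fun _ => ℝ) (0 : ℝ) (WithLp.ofLp u) j
    have hJl : ∀ u : EuclideanSpace ℝ (Fin k), J u (Fin.last k) = 0 := fun u =>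
      Fin.snoc_last (α := fun _ => ℝ) (0 : ℝ) (WithLp.ofLp u)
    have hJiso : Isometry J := by
      refine Isometry.of_dist_eq fun a a' => ?_
      rw [dist_eq_norm, dist_eq_norm]
      have hsub : J a - J a' = J (a - a') := by
        ext i
        refine Fin.lastCases ?_ (fun i' => ?_) i <;>
          simp [hJ, PiLp.sub_apply, Fin.snoc_last, Fin.snoc_castSucc]
      rw [hsub, EuclideanSpace.norm_eq, EuclideanSpace.norm_eq]
      congr 1
      rw [Fin.sum_univ_castSucc]
      simp [hJ, Fin.snoc_last, Fin.snoc_castSucc]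
    have hGJ : ∀ u : EuclideanSpace ℝ (Fin k),
        Λ (J u) = ∑ j, u j • (b j : EuclideanSpace ℝ (Fin n)) := by
      intro u
      rw [hΛ, Fin.sum_univ_castSucc]
      simp only [hBfc, hBfl, hJl, hJc, zero_smul, add_zero]
    -- the preimage of the vertex
    set wv : EuclideanSpace ℝ (Fin (k + 1)) :=
      nv • EuclideanSpace.single (Fin.last k) (1 : ℝ) with hwv
    have hwvl : wv (Fin.last k) = nv := by
      simp [hwv, PiLp.smul_apply, EuclideanSpace.single_apply]
    have hwvc : ∀ j : Fin k, wv j.castSucc = 0 := by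
      intro j
      simp [hwv, PiLp.smul_apply, EuclideanSpace.single_apply,
        ((Fin.castSucc_lt_last j).ne : j.castSucc ≠ Fin.last k)]
    have hGwv : G wv = z := by
      have hΛwv : Λ wv = v := by
        rw [hΛ, Fin.sum_univ_castSucc]
        have h1 : ∀ j : Fin k, wv j.castSucc • Bf j.castSucc = 0 := by
          intro j; rw [hwvc j, zero_smul]
        rw [Finset.sum_eq_zero fun j _ => h1 j, zero_add, hwvl, hBfl, smul_smul,
          mul_inv_cancel₀ hnv.ne', one_smul]
      rw [hG]
      show p₀ + Λ wv = z
      rw [hΛwv, hvdef]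
      abel
    -- the cone in coordinates
    set Q' : Set (EuclideanSpace ℝ (Fin k)) := (fun u => G (J u)) ⁻¹' Bs with hQ'
    have hQ'meas : MeasurableSet Q' :=
      (hGiso.comp hJiso).continuous.measurable hBsmeas
    set A : Set (EuclideanSpace ℝ (Fin (k + 1))) :=
      {y | ∃ u ∈ Q', ∃ t ∈ Set.Icc (0 : ℝ) 1, y = (1 - t) • wv + t • J u} with hA
    have hCsub : {p | ∃ x ∈ P, ∃ t ∈ Set.Icc (0 : ℝ) 1, p = (1 - t) • z + t • x} ⊆ G '' A := by
      rintro p ⟨x, hxP, t, ht, rfl⟩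
      obtain ⟨u, hu⟩ := aux_range S b hp₀S (fun u => G (J u))
        (fun u => by show G (J u) = _; rw [hG]; show p₀ + Λ (J u) = _; rw [hGJ]) x (hPS hxP)
      refine ⟨(1 - t) • wv + t • J u, ⟨u, ?_, t, ht, rfl⟩, ?_⟩
      · show G (J u) ∈ Bs
        rw [hu]
        exact hPB hxP
      · rw [hGaff, hGwv, hu]
    -- transfer to the product space
    set ek := (MeasurableEquiv.toLp 2 (Fin k → ℝ)).symm with hek
    set Q'pi : Set (Fin k → ℝ) := ⇑ek.symm ⁻¹' Q' with hQ'pi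
    have hQ'pimeas : MeasurableSet Q'pi := ek.symm.measurable hQ'meas
    set T : Set (ℝ × (Fin k → ℝ)) :=
      {p | p.1 ∈ Set.Ico 0 nv ∧ (fun j => ((nv - p.1) / nv)⁻¹ * p.2 j) ∈ Q'pi} with hT
    have hTmeas : MeasurableSet T := by
      have hg : Measurable (fun p : ℝ × (Fin k → ℝ) =>
          (fun j => ((nv - p.1) / nv)⁻¹ * p.2 j)) := by
        refine measurable_pi_lambda _ fun j => ?_
        exact (((measurable_const.sub measurable_fst).div_const nv).inv).mul
          ((measurable_pi_apply j).comp measurable_snd)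
      exact (measurable_fst measurableSet_Ico).inter (hg hQ'pimeas)
    have hslice : ∀ h : ℝ, volume (Prod.mk h ⁻¹' T) ≤
        (Set.Ico (0 : ℝ) nv).indicator (fun _ => volume Q'pi) h := by
      intro h
      by_cases hh : h ∈ Set.Ico 0 nv
      · rw [Set.indicator_of_mem hh]
        set r : ℝ := (nv - h) / nv with hr
        have hr0 : 0 < r := div_pos (by linarith [hh.2]) hnv
        have hset : Prod.mk h ⁻¹' T = r • Q'pi := by
          ext u
          simp only [Set.mem_preimage, hT, Set.mem_setOf_eq, hh, true_and]
          rw [Set.mem_smul_set_iff_inv_smul_mem₀ hr0.ne']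
          have heq : (fun j => ((nv - h) / nv)⁻¹ * u j) = r⁻¹ • u := by
            funext j; simp [hr, Pi.smul_apply]
          rw [heq]
        rw [hset, Measure.addHaar_smul_of_nonneg volume hr0.le]
        have hr1 : r ≤ 1 := by rw [hr, div_le_one hnv]; linarith [hh.1]
        have hle1 : ENNReal.ofReal (r ^ finrank ℝ (Fin k → ℝ)) ≤ 1 := by
          rw [ENNReal.ofReal_le_one]
          exact pow_le_one₀ hr0.le hr1
        calc ENNReal.ofReal (r ^ finrank ℝ (Fin k → ℝ)) * volume Q'pi
            ≤ 1 * volume Q'pi := mul_le_mul_left hle1 _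
          _ = volume Q'pi := one_mul _
      · rw [Set.indicator_of_notMem hh]
        have hempty : Prod.mk h ⁻¹' T = ∅ := by
          ext u
          simp only [Set.mem_preimage, hT, Set.mem_setOf_eq, Set.mem_empty_iff_false, iff_false]
          exact fun hc => hh hc.1
        rw [hempty, measure_empty]
    have hTvol : volume T ≤ ENNReal.ofReal nv * volume Q'pi := by
      rw [Measure.volume_eq_prod, Measure.prod_apply hTmeas]
      calc ∫⁻ h, volume (Prod.mk h ⁻¹' T) ≤
          ∫⁻ h, (Set.Ico (0 : ℝ) nv).indicator (fun _ => volume Q'pi) h :=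
            lintegral_mono hslice
        _ = volume Q'pi * volume (Set.Ico (0 : ℝ) nv) := by
            rw [lintegral_indicator measurableSet_Ico, setLIntegral_const]
        _ = volume Q'pi * ENNReal.ofReal nv := by rw [Real.volume_Ico, sub_zero]
        _ = ENNReal.ofReal nv * volume Q'pi := mul_comm _ _
    set π := MeasurableEquiv.piFinSuccAbove (fun _ : Fin (k + 1) => ℝ) (Fin.last k) with hπdef
    set em := ⇑(WithLp.equiv 2 (Fin (k + 1) → ℝ)) with hem
    have himg : ∀ y ∈ A, π (em y) ∈ T ∪ ({nv} ×ˢ (Set.univ : Set (Fin k → ℝ))) := by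
      rintro yy ⟨u, huQ, t, ht, rfl⟩
      set y : EuclideanSpace ℝ (Fin (k + 1)) := (1 - t) • wv + t • J u with hy
      have hylast : y (Fin.last k) = (1 - t) * nv := by
        simp only [hy, PiLp.add_apply, PiLp.smul_apply, smul_eq_mul, hwvl, hJl, mul_zero,
          add_zero]
      have hycast : ∀ j : Fin k, y j.castSucc = t * u j := by
        intro j
        simp only [hy, PiLp.add_apply, PiLp.smul_apply, smul_eq_mul, hwvc, hJc, mul_zero,
          zero_add]
      have hπy : π (em y) = (y (Fin.last k), fun j => y ((Fin.last k).succAbove j)) := rfl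
      rw [hπy]
      rcases eq_or_lt_of_le ht.1 with h0 | h0
      · right
        refine ⟨?_, trivial⟩
        show y (Fin.last k) = nv
        rw [hylast, ← h0]
        ring
      · left
        constructor
        · rw [hylast]
          constructor
          · show (0 : ℝ) ≤ (1 - t) * nv
            have h1t : 0 ≤ 1 - t := by linarith [ht.2]
            positivity
          · show (1 - t) * nv < nv
            nlinarith [mul_pos h0 hnv]
        · have hcoef : (nv - y (Fin.last k)) / nv = t := by
            rw [hylast]
            field_simp
            ring
          have heq2 : (fun j => ((nv - y (Fin.last k)) / nv)⁻¹ * y ((Fin.last k).succAbove j))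
              = fun j => u j := by
            funext j
            rw [hcoef, Fin.succAbove_last, hycast j]
            field_simp
          show (fun j => ((nv - y (Fin.last k)) / nv)⁻¹ * y ((Fin.last k).succAbove j)) ∈ Q'pi
          rw [heq2]
          show ek.symm (fun j => u j) ∈ Q'
          have : ek.symm (fun j => u j) = u := rfl
          rw [this]
          exact huQ
    -- the measure chain
    have hd1 : (0 : ℝ) ≤ (k : ℝ) + 1 := by positivity
    have step1 : μH[(k : ℝ) + 1] {p | ∃ x ∈ P, ∃ t ∈ Set.Icc (0 : ℝ) 1, p = (1 - t) • z + t • x}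
        ≤ μH[(k : ℝ) + 1] A := by
      calc μH[(k : ℝ) + 1] {p | ∃ x ∈ P, ∃ t ∈ Set.Icc (0 : ℝ) 1, p = (1 - t) • z + t • x}
          ≤ μH[(k : ℝ) + 1] (G '' A) := measure_mono hCsub
        _ = μH[(k : ℝ) + 1] A := hGiso.hausdorffMeasure_image (Or.inl hd1) A
    have step2 := (PiLp.antilipschitzWith_ofLp 2
      (fun _ : Fin (k + 1) => ℝ)).le_hausdorffMeasure_image hd1 A
    have hpim : (μH[(k : ℝ) + 1] : Measure (Fin (k + 1) → ℝ)) = volume := by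
      rw [show ((k : ℝ) + 1) = ((Fintype.card (Fin (k + 1)) : ℕ) : ℝ) by simp]
      exact hausdorffMeasure_pi_real
    have step4 : volume (em '' A) ≤ ENNReal.ofReal nv * volume Q'pi := by
      have hsub2 : em '' A ⊆ ⇑π ⁻¹' (T ∪ ({nv} ×ˢ (Set.univ : Set (Fin k → ℝ)))) := by
        rw [Set.image_subset_iff]
        intro y hy
        exact himg y hy
      have hmp := volume_preserving_piFinSuccAbove (fun _ : Fin (k + 1) => ℝ) (Fin.last k)
      have hz0 : volume ({nv} ×ˢ (Set.univ : Set (Fin k → ℝ))) = 0 := by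
        rw [Measure.volume_eq_prod, Measure.prod_prod, Real.volume_singleton, zero_mul]
      calc volume (em '' A)
          ≤ volume (⇑π ⁻¹' (T ∪ ({nv} ×ˢ (Set.univ : Set (Fin k → ℝ))))) := measure_mono hsub2
        _ = Measure.map π volume (T ∪ ({nv} ×ˢ (Set.univ : Set (Fin k → ℝ)))) :=
            (π.map_apply _).symm
        _ = volume (T ∪ ({nv} ×ˢ (Set.univ : Set (Fin k → ℝ)))) := by rw [hmp.map_eq]
        _ ≤ volume T + volume ({nv} ×ˢ (Set.univ : Set (Fin k → ℝ))) := measure_union_le _ _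
        _ = volume T := by rw [hz0, add_zero]
        _ ≤ ENNReal.ofReal nv * volume Q'pi := hTvol
    have step5 : volume Q'pi ≤ μH[(k : ℝ)] P := by
      have hpik : (μH[(k : ℝ)] : Measure (Fin k → ℝ)) = volume := by
        rw [show ((k : ℝ)) = ((Fintype.card (Fin k) : ℕ) : ℝ) by simp]
        exact hausdorffMeasure_pi_real
      have hQim : Q'pi = ⇑(WithLp.equiv 2 (Fin k → ℝ)) '' Q' := by
        rw [hQ'pi, hek, MeasurableEquiv.symm_symm, MeasurableEquiv.coe_toLp]
        exact (Equiv.image_eq_preimage_symm (WithLp.equiv 2 (Fin k → ℝ)) Q').symm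
      have hk0 : (0 : ℝ) ≤ (k : ℝ) := by positivity
      calc volume Q'pi = μH[(k : ℝ)] Q'pi := by rw [hpik]
        _ ≤ ((1 : ℝ≥0) : ℝ≥0∞) ^ (k : ℝ) * μH[(k : ℝ)] Q' := by
            rw [hQim]
            exact (PiLp.lipschitzWith_ofLp 2 (fun _ : Fin k => ℝ)).hausdorffMeasure_image_le
              hk0 Q'
        _ = μH[(k : ℝ)] Q' := by rw [ENNReal.coe_one, ENNReal.one_rpow, one_mul]
        _ = μH[(k : ℝ)] ((fun u => G (J u)) '' Q') :=
            ((hGiso.comp hJiso).hausdorffMeasure_image (Or.inl hk0) Q').symm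
        _ ≤ μH[(k : ℝ)] Bs := measure_mono (Set.image_preimage_subset _ _)
        _ ≤ μH[(k : ℝ)] P := hBsP
    have hK : (((Fintype.card (Fin (k + 1)) : ℝ≥0) ^ ((1 : ℝ≥0∞) / 2).toReal : ℝ≥0) : ℝ≥0∞)
        ^ ((k : ℝ) + 1) ≤ ENNReal.ofReal (((k : ℝ) + 1) ^ (k + 1)) := by
      have hcard : (Fintype.card (Fin (k + 1)) : ℝ≥0) = ((k + 1 : ℕ) : ℝ≥0) := by simp
      have h1 : ((Fintype.card (Fin (k + 1)) : ℝ≥0) ^ ((1 : ℝ≥0∞) / 2).toReal : ℝ≥0)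
          ≤ ((k + 1 : ℕ) : ℝ≥0) := by
        rw [hcard]
        calc ((k + 1 : ℕ) : ℝ≥0) ^ ((1 : ℝ≥0∞) / 2).toReal
            ≤ ((k + 1 : ℕ) : ℝ≥0) ^ (1 : ℝ) := by
              refine NNReal.rpow_le_rpow_of_exponent_le ?_ ?_
              · exact_mod_cast Nat.one_le_iff_ne_zero.2 (Nat.succ_ne_zero k)
              · rw [ENNReal.toReal_div, ENNReal.toReal_one, ENNReal.toReal_ofNat]
                norm_num
          _ = ((k + 1 : ℕ) : ℝ≥0) := NNReal.rpow_one _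
      calc (((Fintype.card (Fin (k + 1)) : ℝ≥0) ^ ((1 : ℝ≥0∞) / 2).toReal : ℝ≥0) : ℝ≥0∞)
          ^ ((k : ℝ) + 1)
          ≤ (((k + 1 : ℕ) : ℝ≥0) : ℝ≥0∞) ^ ((k : ℝ) + 1) := by
            exact ENNReal.rpow_le_rpow (ENNReal.coe_le_coe.2 h1) hd1
        _ = (((k + 1 : ℕ) : ℝ≥0) : ℝ≥0∞) ^ ((k + 1 : ℕ) : ℝ) := by norm_num
        _ = (((k + 1 : ℕ) : ℝ≥0) : ℝ≥0∞) ^ (k + 1 : ℕ) := ENNReal.rpow_natCast _ _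
        _ = ENNReal.ofReal (((k : ℝ) + 1) ^ (k + 1)) := by
            rw [ENNReal.ofReal_pow (by positivity)]
            congr 1
            rw [← ENNReal.ofReal_coe_nnreal]
            congr 1
            push_cast
            ring
    calc μH[(k : ℝ) + 1] {p | ∃ x ∈ P, ∃ t ∈ Set.Icc (0 : ℝ) 1, p = (1 - t) • z + t • x}
        ≤ μH[(k : ℝ) + 1] A := step1
      _ ≤ (((Fintype.card (Fin (k + 1)) : ℝ≥0) ^ ((1 : ℝ≥0∞) / 2).toReal : ℝ≥0) : ℝ≥0∞)
          ^ ((k : ℝ) + 1) * μH[(k : ℝ) + 1] (em '' A) := step2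
      _ = (((Fintype.card (Fin (k + 1)) : ℝ≥0) ^ ((1 : ℝ≥0∞) / 2).toReal : ℝ≥0) : ℝ≥0∞)
          ^ ((k : ℝ) + 1) * volume (em '' A) := by rw [hpim]
      _ ≤ ENNReal.ofReal (((k : ℝ) + 1) ^ (k + 1)) * (ENNReal.ofReal nv * μH[(k : ℝ)] P) := by
          refine mul_le_mul' hK (step4.trans ?_)
          exact mul_le_mul_right step5 _
      _ = ENNReal.ofReal (((k : ℝ) + 1) ^ (k + 1) *
            infDist z (S : Set (EuclideanSpace ℝ (Fin n)))) * μH[(k : ℝ)] P := by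
          rw [hdist, ← mul_assoc, ← ENNReal.ofReal_mul (by positivity)]
end
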